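/- (Triangular moment system for degree-N polynomials is invertible) For N : ℕ and T > 0, the (N+1)×(N+1) matrix M with entries M_{α,ν} = T^{α+ν+1}/((α+ν+1)·ν!) (arising from m_α = ∫₀ᵀ t^α · t^ν/ν! dt) has nonzero determinant. -/

import Mathlib

open MeasureTheory intervalIntegral Polynomial

theorem stmt17 (N : ℕ) (T : ℝ) (hT : 0 < T)
    (M : Matrix (Fin (N + 1)) (Fin (N + 1)) ℝ)
    (hM : ∀ α ν : Fin (N + 1),
      M α ν = T ^ ((α : ℕ) + (ν : ℕ) + 1) /
        (((α : ℕ) + (ν : ℕ) + 1 : ℕ) * (Nat.factorial (ν : ℕ) : ℝ))) :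
    M.det ≠ 0 := by
  intro hdet
  obtain ⟨v, hv, hMv⟩ := (Matrix.exists_mulVec_eq_zero_iff).2 hdet
  set w : Fin (N+1) → ℝ := fun ν => v ν / (Nat.factorial (ν:ℕ) : ℝ) with hw
  -- key integral computation
  have key : ∀ k : ℕ,
      ∫ t in (0:ℝ)..T, t ^ k * (∑ ν : Fin (N+1), w ν * t ^ (ν:ℕ))
        = ∑ ν : Fin (N+1), w ν * (T ^ (k + (ν:ℕ) + 1) / (k + (ν:ℕ) + 1)) := by
    intro k
    have h1 : ∀ t : ℝ, t ^ k * (∑ ν : Fin (N+1), w ν * t ^ (ν:ℕ))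
        = ∑ ν : Fin (N+1), w ν * t ^ (k + (ν:ℕ)) := by
      intro t
      rw [Finset.mul_sum]
      refine Finset.sum_congr rfl fun ν _ => by ring
    simp_rw [h1]
    rw [intervalIntegral.integral_finset_sum]
    · refine Finset.sum_congr rfl fun ν _ => ?_
      rw [intervalIntegral.integral_const_mul, integral_pow]
      push_cast
      ring_nf
    · intro ν _
      exact (continuous_const.mul (continuous_pow _)).intervalIntegrable _ _
  -- each moment of p vanishes
  have hmom : ∀ α : Fin (N+1),
      ∫ t in (0:ℝ)..T, t ^ (α:ℕ) * (∑ ν : Fin (N+1), w ν * t ^ (ν:ℕ)) = 0 := by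
    intro α
    rw [key]
    have := congrFun hMv α
    simp only [Matrix.mulVec, dotProduct, Pi.zero_apply] at this
    rw [← this]
    refine Finset.sum_congr rfl fun ν _ => ?_
    rw [hM, hw]
    have hfac : (Nat.factorial (ν:ℕ) : ℝ) ≠ 0 := by
      exact_mod_cast (Nat.factorial_pos _).ne'
    have hd : ((α:ℕ) + (ν:ℕ) + 1 : ℝ) ≠ 0 := by positivity
    push_cast
    field_simp
  -- integral of p^2 vanishes
  have hsq : ∫ t in (0:ℝ)..T, (∑ ν : Fin (N+1), w ν * t ^ (ν:ℕ)) ^ 2 = 0 := by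
    have h2 : ∀ t : ℝ, (∑ ν : Fin (N+1), w ν * t ^ (ν:ℕ)) ^ 2
        = ∑ α : Fin (N+1), w α * (t ^ (α:ℕ) * (∑ ν : Fin (N+1), w ν * t ^ (ν:ℕ))) := by
      intro t
      rw [sq, Finset.sum_mul]
      refine Finset.sum_congr rfl fun α _ => by ring
    simp_rw [h2]
    rw [intervalIntegral.integral_finset_sum]
    · simp_rw [intervalIntegral.integral_const_mul]
      refine Finset.sum_eq_zero fun α _ => ?_
      rw [hmom α, mul_zero]
    · intro α _
      have hc1 : Continuous fun t : ℝ => ∑ ν : Fin (N+1), w ν * t ^ (ν:ℕ) :=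
        continuous_finset_sum _ fun ν _ => continuous_const.mul (continuous_pow _)
      exact (continuous_const.mul ((continuous_pow _).mul hc1)).intervalIntegrable _ _
  -- hence p = 0 a.e. on Ioc 0 T
  set p : Polynomial ℝ := ∑ ν : Fin (N+1), Polynomial.C (w ν) * Polynomial.X ^ (ν:ℕ) with hp
  have hpeval : ∀ t : ℝ, p.eval t = ∑ ν : Fin (N+1), w ν * t ^ (ν:ℕ) := by
    intro t; simp [hp, Polynomial.eval_finset_sum]
  have hcont : Continuous fun t : ℝ => (∑ ν : Fin (N+1), w ν * t ^ (ν:ℕ)) ^ 2 :=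
    (continuous_finset_sum _ fun ν _ => continuous_const.mul (continuous_pow _)).pow 2
  have hae : (fun t : ℝ => (∑ ν : Fin (N+1), w ν * t ^ (ν:ℕ)) ^ 2)
      =ᵐ[volume.restrict (Set.Ioc 0 T)] 0 := by
    rw [← intervalIntegral.integral_eq_zero_iff_of_le_of_nonneg_ae hT.le
      (Filter.Eventually.of_forall fun t => sq_nonneg _)
      (hcont.intervalIntegrable _ _)]
    exact hsq
  -- p must be the zero polynomial
  have hp0 : p = 0 := by
    by_contra hpne
    have hroots : Set.Finite {x : ℝ | p.IsRoot x} := Polynomial.finite_setOf_isRoot hpne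
    set B : Set ℝ := {t : ℝ | ¬ ((fun t : ℝ => (∑ ν : Fin (N+1), w ν * t ^ (ν:ℕ)) ^ 2) t = (0:ℝ → ℝ) t)} with hB
    have hsub : Set.Ioc (0:ℝ) T ⊆ {x : ℝ | p.IsRoot x} ∪ (B ∩ Set.Ioc 0 T) := by
      intro t ht
      by_cases h : (∑ ν : Fin (N+1), w ν * t ^ (ν:ℕ)) ^ 2 = 0
      · left
        have h0 : (∑ ν : Fin (N+1), w ν * t ^ (ν:ℕ)) = 0 :=
          pow_eq_zero_iff (n := 2) (by norm_num) |>.mp h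
        simp [Polynomial.IsRoot, hpeval, h0]
      · exact Or.inr ⟨by simpa [hB] using h, ht⟩
    have hBnull : volume (B ∩ Set.Ioc (0:ℝ) T) = 0 := by
      have h2 : volume.restrict (Set.Ioc (0:ℝ) T) B = 0 := by
        have := hae
        rw [Filter.EventuallyEq, ae_iff] at this
        exact this
      rwa [Measure.restrict_apply' measurableSet_Ioc] at h2
    have hmeas : volume (Set.Ioc (0:ℝ) T) = 0 :=
      measure_mono_null hsub (measure_union_null (hroots.measure_zero volume) hBnull)
    rw [Real.volume_Ioc] at hmeas
    simp at hmeas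
    linarith [ENNReal.ofReal_pos.mpr (by linarith : (0:ℝ) < T - 0)]
  -- conclude v = 0, contradiction
  apply hv
  funext μ
  have hc : p.coeff (μ:ℕ) = w μ := by
    rw [hp, Polynomial.finset_sum_coeff]
    simp only [Polynomial.coeff_C_mul, Polynomial.coeff_X_pow]
    rw [Finset.sum_eq_single μ]
    · simp
    · intro ν _ hne
      have : (ν:ℕ) ≠ (μ:ℕ) := fun h => hne (Fin.ext h)
      simp [Ne.symm this]
    · simp
  rw [hp0] at hc
  simp only [Polynomial.coeff_zero] at hc
  have hfac : (Nat.factorial (μ:ℕ) : ℝ) ≠ 0 := by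
    exact_mod_cast (Nat.factorial_pos _).ne'
  have : v μ = 0 := by
    have := hc.symm
    rw [hw] at this
    field_simp at this
    simpa using this
  simpa using this
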